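/- Let r ≥ 1, m ≥ 2, and for 1 ≤ i, j ≤ m let P_{ji} : ℤ^r → ℂ, with symbol matrix P(ξ) = (P_{ji}(ξ)) ∈ ℂ^{m×m}. Assume: (a) there is a finite set F₀ ⊆ ℤ^r such that for all ξ ∈ ℤ^r \ F₀ and all 1 ≤ ℓ ≤ m, |P_{ℓℓ}(ξ)| > Σ_{i≠ℓ} |P_{ℓi}(ξ)| and |P_{ℓℓ}(ξ)| > Σ_{j≠ℓ} |P_{jℓ}(ξ)| (diagonal dominance by rows and columns); (b) there exist τ₁, …, τ_m ∈ ℝ and C' > 0 such that |P_{ℓi}(ξ)| ≤ C'(1+‖ξ‖²)^{τ_ℓ/2} and |P_{iℓ}(ξ)| ≤ C'(1+‖ξ‖²)^{τ_ℓ/2} for all ξ ∈ ℤ^r, all ℓ, and all i ≠ ℓ; (c) there exist C₁, …, C_m > 0, k₁, …, k_m ∈ ℝ with k_ℓ > τ_ℓ for each ℓ, and a finite set F₁ ⊆ ℤ^r, such that |P_{ℓℓ}(ξ)| ≥ C_ℓ(1+‖ξ‖²)^{k_ℓ/2} for all ξ ∈ ℤ^r \ F₁ and all ℓ. Then there exist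 C > 0, k ∈ ℝ and a finite set F ⊆ ℤ^r such that λ_min(P(ξ)) ≥ C(1+‖ξ‖²)^{k/2} for all ξ ∈ ℤ^r \ F; indeed one may take k = min{k₁, …, k_m} and C = (1/2)·min{C₁, …, C_m}. -/

import Mathlib

noncomputable section

open scoped BigOperators

/-- Euclidean (ℓ²) norm of a complex vector. -/
def l2norm {n : Type*} [Fintype n] (v : n → ℂ) : ℝ :=
  Real.sqrt (∑ i, ‖v i‖ ^ 2)

/-- Smallest singular value of a complex matrix, characterized as the infimum of
`‖A v‖₂` over unit vectors `v`. -/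
def sminVal {m n : Type*} [Fintype m] [Fintype n] (A : Matrix m n ℂ) : ℝ :=
  sInf {x : ℝ | ∃ v : n → ℂ, l2norm v = 1 ∧ x = l2norm (A.mulVec v)}

/-- The weight `1 + ‖ξ‖²` for a frequency `ξ ∈ ℤ^r`. -/
def wt {r : ℕ} (ξ : Fin r → ℤ) : ℝ :=
  1 + ∑ i, ((ξ i : ℝ)) ^ 2


lemma wt_ge_one {r : ℕ} (ξ : Fin r → ℤ) : 1 ≤ wt ξ := by
  have : (0:ℝ) ≤ ∑ i, ((ξ i : ℝ))^2 := Finset.sum_nonneg fun i _ => sq_nonneg _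
  simp [wt]; linarith

lemma wt_lt_finite (r : ℕ) (M : ℝ) : {ξ : Fin r → ℤ | wt ξ < M}.Finite := by
  apply Set.Finite.subset (Set.Finite.pi (t := fun _ : Fin r => (Set.Icc (-⌈M⌉) ⌈M⌉))
    (fun _ => Set.finite_Icc _ _))
  intro ξ hξ
  simp only [Set.mem_setOf_eq] at hξ
  simp only [Set.mem_pi, Set.mem_univ, Set.mem_Icc, forall_true_left]
  intro i
  have h1 : (ξ i : ℝ)^2 ≤ ∑ j, ((ξ j:ℝ))^2 :=
    Finset.single_le_sum (fun j _ => sq_nonneg ((ξ j : ℝ))) (Finset.mem_univ i)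
  have h2 : ((ξ i : ℝ))^2 < M := by unfold wt at hξ; linarith
  have h3 : ((ξ i)^2 : ℝ) ≤ (⌈M⌉ : ℝ) := by push_cast; linarith [Int.le_ceil M]
  have h4 : (ξ i)^2 ≤ ⌈M⌉ := by exact_mod_cast h3
  have habs : |ξ i| ≤ (ξ i)^2 := by nlinarith [sq_nonneg (|ξ i|-1), sq_abs (ξ i), abs_nonneg (ξ i)]
  constructor
  · linarith [neg_abs_le (ξ i)]
  · linarith [le_abs_self (ξ i)]

lemma smin_ge {μ : Type*} [Fintype μ] [DecidableEq μ] [Nonempty μ] (A : Matrix μ μ ℂ) (c : ℝ)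
    (hc : 0 ≤ c)
    (h : ∀ ℓ, c + ((∑ i ∈ Finset.univ.erase ℓ, ‖A ℓ i‖) +
        (∑ j ∈ Finset.univ.erase ℓ, ‖A j ℓ‖))/2 ≤ ‖A ℓ ℓ‖) :
    c ≤ sminVal A := by
  classical
  have hne : {x : ℝ | ∃ v : μ → ℂ, l2norm v = 1 ∧ x = l2norm (A.mulVec v)}.Nonempty := by
    refine ⟨_, (Pi.single (Classical.arbitrary μ) 1 : μ → ℂ), ?_, rfl⟩
    unfold l2norm
    have : (∑ i, ‖(Pi.single (Classical.arbitrary μ) 1 : μ → ℂ) i‖^2) = 1 := by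
      rw [Finset.sum_eq_single (Classical.arbitrary μ)]
      · simp
      · intro b _ hb; simp [Pi.single_eq_of_ne hb]
      · simp
    rw [this, Real.sqrt_one]
  refine le_csInf hne ?_
  rintro x ⟨v, hv, rfl⟩
  have hsum0 : (0:ℝ) ≤ ∑ i, ‖v i‖^2 := Finset.sum_nonneg fun i _ => sq_nonneg _
  have hv2 : ∑ i, ‖v i‖^2 = 1 := by
    have := Real.sq_sqrt hsum0
    unfold l2norm at hv
    rw [hv] at this; linarith
  set phase : μ → ℂ := fun ℓ => if A ℓ ℓ = 0 then 1 else (starRingEnd ℂ) (A ℓ ℓ) / ‖A ℓ ℓ‖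
    with hphase
  have hpl : ∀ ℓ, A ℓ ℓ ≠ 0 → phase ℓ = (starRingEnd ℂ) (A ℓ ℓ) / (‖A ℓ ℓ‖:ℂ) :=
    fun ℓ h0 => if_neg h0
  have hphase_norm : ∀ ℓ, ‖phase ℓ‖ = 1 := by
    intro ℓ; by_cases h0 : A ℓ ℓ = 0
    · simp [hphase, h0]
    · have h1 : ‖(starRingEnd ℂ) (A ℓ ℓ)‖ = ‖A ℓ ℓ‖ := RCLike.norm_conj _
      have hz : ‖A ℓ ℓ‖ ≠ 0 := norm_ne_zero_iff.mpr h0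
      rw [hpl ℓ h0, norm_div, h1, Complex.norm_real, Real.norm_eq_abs,
        abs_of_nonneg (norm_nonneg (A ℓ ℓ)), div_self hz]
  have hdiag_re : ∀ ℓ, (phase ℓ * ((starRingEnd ℂ) (v ℓ) * (A ℓ ℓ * v ℓ))).re
      = ‖A ℓ ℓ‖ * ‖v ℓ‖^2 := by
    intro ℓ
    by_cases h0 : A ℓ ℓ = 0
    · simp [h0]
    · have hn : (‖A ℓ ℓ‖ : ℂ) ≠ 0 := by
        exact Complex.ofReal_ne_zero.mpr (norm_ne_zero_iff.mpr h0)
      have e1 : (starRingEnd ℂ) (A ℓ ℓ) * A ℓ ℓ = ((‖A ℓ ℓ‖^2 : ℝ) : ℂ) := by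
        rw [mul_comm, Complex.mul_conj]
        norm_cast
        rw [Complex.normSq_eq_norm_sq]
      have e2 : (starRingEnd ℂ) (v ℓ) * v ℓ = ((‖v ℓ‖^2 : ℝ) : ℂ) := by
        rw [mul_comm, Complex.mul_conj]
        norm_cast
        rw [Complex.normSq_eq_norm_sq]
      have key : phase ℓ * ((starRingEnd ℂ) (v ℓ) * (A ℓ ℓ * v ℓ))
          = (((‖A ℓ ℓ‖ * ‖v ℓ‖^2 : ℝ)) : ℂ) := by
        rw [hpl ℓ h0, div_mul_eq_mul_div, div_eq_iff hn]
        rw [show (starRingEnd ℂ) (A ℓ ℓ) * ((starRingEnd ℂ) (v ℓ) * (A ℓ ℓ * v ℓ))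
            = ((starRingEnd ℂ) (A ℓ ℓ) * A ℓ ℓ) * ((starRingEnd ℂ) (v ℓ) * v ℓ) by ring,
          e1, e2]
        push_cast
        ring
      rw [key, Complex.ofReal_re]
  set S : ℂ := ∑ j, phase j * ((starRingEnd ℂ) (v j) * A.mulVec v j) with hS
  have hub : S.re ≤ l2norm (A.mulVec v) := by
    have h1 : S.re ≤ ‖S‖ := Complex.re_le_norm S
    have h2 : ‖S‖ ≤ ∑ j, ‖v j‖ * ‖A.mulVec v j‖ := by
      refine (norm_sum_le _ _).trans (Finset.sum_le_sum fun j _ => ?_)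
      rw [norm_mul, norm_mul, hphase_norm j, one_mul, RCLike.norm_conj]
    have h3 : (∑ j, ‖v j‖ * ‖A.mulVec v j‖) ≤ l2norm (A.mulVec v) := by
      have hcs := Finset.sum_mul_sq_le_sq_mul_sq Finset.univ (fun j => ‖v j‖)
        (fun j => ‖A.mulVec v j‖)
      rw [hv2, one_mul] at hcs
      have hnn : (0:ℝ) ≤ ∑ j, ‖v j‖ * ‖A.mulVec v j‖ :=
        Finset.sum_nonneg fun j _ => mul_nonneg (norm_nonneg _) (norm_nonneg _)
      unfold l2norm
      exact (Real.le_sqrt hnn (Finset.sum_nonneg fun j _ => sq_nonneg _)).mpr hcs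
    linarith
  have hlb : c ≤ S.re := by
    have hmv : ∀ j, A.mulVec v j = ∑ i, A j i * v i := by
      intro j; simp [Matrix.mulVec, dotProduct]
    have hSre : S.re = ∑ j, ∑ i, (phase j * ((starRingEnd ℂ) (v j) * (A j i * v i))).re := by
      rw [hS, Complex.re_sum]
      refine Finset.sum_congr rfl fun j _ => ?_
      rw [hmv j, Finset.mul_sum, Finset.mul_sum, Complex.re_sum]
    rw [hSre]
    have hsplit : ∀ j : μ, ∑ i, (phase j * ((starRingEnd ℂ) (v j) * (A j i * v i))).re
        = ‖A j j‖ * ‖v j‖^2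
          + ∑ i ∈ Finset.univ.erase j, (phase j * ((starRingEnd ℂ) (v j) * (A j i * v i))).re := by
      intro j
      rw [← Finset.sum_erase_add _ _ (Finset.mem_univ j), hdiag_re j, add_comm]
    have hoffb : ∀ j, ∀ i ∈ Finset.univ.erase j,
        -(‖A j i‖ * (‖v j‖^2 + ‖v i‖^2) / 2)
          ≤ (phase j * ((starRingEnd ℂ) (v j) * (A j i * v i))).re := by
      intro j i _
      have h1 : |(phase j * ((starRingEnd ℂ) (v j) * (A j i * v i))).re|
          ≤ ‖A j i‖ * (‖v j‖ * ‖v i‖) := by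
        refine (Complex.abs_re_le_norm _).trans ?_
        rw [norm_mul, norm_mul, norm_mul, hphase_norm j, one_mul, RCLike.norm_conj]
        ring_nf
        exact le_refl _
      have h2 : ‖v j‖ * ‖v i‖ ≤ (‖v j‖^2 + ‖v i‖^2)/2 := by
        nlinarith [sq_nonneg (‖v j‖ - ‖v i‖)]
      have h3 : ‖A j i‖ * (‖v j‖ * ‖v i‖) ≤ ‖A j i‖ * (‖v j‖^2 + ‖v i‖^2)/2 := by
        rw [mul_div_assoc]
        exact mul_le_mul_of_nonneg_left h2 (norm_nonneg _)
      have h4 := neg_abs_le ((phase j * ((starRingEnd ℂ) (v j) * (A j i * v i))).re)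
      linarith
    have expand : ∀ j : μ, ∑ i ∈ Finset.univ.erase j, ‖A j i‖ * (‖v j‖^2 + ‖v i‖^2) / 2
        = ((∑ i ∈ Finset.univ.erase j, ‖A j i‖) * ‖v j‖^2
            + ∑ i ∈ Finset.univ.erase j, ‖A j i‖ * ‖v i‖^2)/2 := by
      intro j
      rw [← Finset.sum_div]
      congr 1
      rw [Finset.sum_mul, ← Finset.sum_add_distrib]
      exact Finset.sum_congr rfl fun i _ => by ring
    have hswap : ∑ j, ∑ i ∈ Finset.univ.erase j, ‖A j i‖ * ‖v i‖^2
        = ∑ i, (∑ j ∈ Finset.univ.erase i, ‖A j i‖) * ‖v i‖^2 := by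
      rw [Finset.sum_comm' (s := Finset.univ) (t := fun j : μ => Finset.univ.erase j)
        (t' := Finset.univ) (s' := fun i : μ => Finset.univ.erase i)
        (fun x y => by simp [Finset.mem_erase]; exact ne_comm)]
      exact Finset.sum_congr rfl fun i _ => (Finset.sum_mul _ _ _).symm
    have step1 : ∑ j, (‖A j j‖ * ‖v j‖^2
          - ((∑ i ∈ Finset.univ.erase j, ‖A j i‖) * ‖v j‖^2
            + ∑ i ∈ Finset.univ.erase j, ‖A j i‖ * ‖v i‖^2)/2)
        ≤ ∑ j, ∑ i, (phase j * ((starRingEnd ℂ) (v j) * (A j i * v i))).re := by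
      refine Finset.sum_le_sum fun j _ => ?_
      rw [hsplit j, ← expand j]
      have h5 : -(∑ i ∈ Finset.univ.erase j, ‖A j i‖ * (‖v j‖^2 + ‖v i‖^2) / 2)
          ≤ ∑ i ∈ Finset.univ.erase j,
              (phase j * ((starRingEnd ℂ) (v j) * (A j i * v i))).re := by
        rw [← Finset.sum_neg_distrib]
        exact Finset.sum_le_sum (hoffb j)
      linarith
    have hglobal : ∑ j, (‖A j j‖ * ‖v j‖^2
          - ((∑ i ∈ Finset.univ.erase j, ‖A j i‖) * ‖v j‖^2
            + ∑ i ∈ Finset.univ.erase j, ‖A j i‖ * ‖v i‖^2)/2)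
        = ∑ j, (‖A j j‖ - ((∑ i ∈ Finset.univ.erase j, ‖A j i‖)
            + ∑ i ∈ Finset.univ.erase j, ‖A i j‖)/2) * ‖v j‖^2 := by
      rw [Finset.sum_sub_distrib, ← Finset.sum_div, Finset.sum_add_distrib, hswap]
      rw [show ∑ j, (‖A j j‖ - ((∑ i ∈ Finset.univ.erase j, ‖A j i‖)
            + ∑ i ∈ Finset.univ.erase j, ‖A i j‖)/2) * ‖v j‖^2
          = ∑ j, (‖A j j‖ * ‖v j‖^2
            - ((∑ i ∈ Finset.univ.erase j, ‖A j i‖) * ‖v j‖^2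
              + (∑ i ∈ Finset.univ.erase j, ‖A i j‖) * ‖v j‖^2)/2) from
        Finset.sum_congr rfl fun j _ => by ring]
      rw [Finset.sum_sub_distrib, ← Finset.sum_div, Finset.sum_add_distrib]
    calc c = ∑ j, c * ‖v j‖^2 := by rw [← Finset.mul_sum, hv2, mul_one]
      _ ≤ ∑ j, (‖A j j‖ - ((∑ i ∈ Finset.univ.erase j, ‖A j i‖)
            + ∑ i ∈ Finset.univ.erase j, ‖A i j‖)/2) * ‖v j‖^2 := by
          refine Finset.sum_le_sum fun j _ => ?_
          exact mul_le_mul_of_nonneg_right (by linarith [h j]) (sq_nonneg _)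
      _ = _ := hglobal.symm
      _ ≤ _ := step1
  linarith

theorem diag_dominant_smin_lower_bound (r m : ℕ) (hr : 1 ≤ r) (hm : 2 ≤ m)
    (P : Fin m → Fin m → (Fin r → ℤ) → ℂ)
    -- (a) diagonal dominance by rows and columns outside a finite set
    (F₀ : Set (Fin r → ℤ)) (hF₀ : F₀.Finite)
    (hdom : ∀ ξ, ξ ∉ F₀ → ∀ ℓ : Fin m,
      (∑ i ∈ Finset.univ.erase ℓ, ‖P ℓ i ξ‖) < ‖P ℓ ℓ ξ‖ ∧
      (∑ j ∈ Finset.univ.erase ℓ, ‖P j ℓ ξ‖) < ‖P ℓ ℓ ξ‖)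
    -- (b) polynomial bounds on the off-diagonal entries
    (τ : Fin m → ℝ) (C' : ℝ) (hC' : 0 < C')
    (hoff : ∀ ξ, ∀ ℓ i : Fin m, i ≠ ℓ →
      ‖P ℓ i ξ‖ ≤ C' * wt ξ ^ (τ ℓ / 2) ∧ ‖P i ℓ ξ‖ ≤ C' * wt ξ ^ (τ ℓ / 2))
    -- (c) lower bounds with larger exponents on the diagonal entries
    (Cdiag : Fin m → ℝ) (hCdiag : ∀ ℓ, 0 < Cdiag ℓ)
    (k : Fin m → ℝ) (hk : ∀ ℓ, τ ℓ < k ℓ)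
    (F₁ : Set (Fin r → ℤ)) (hF₁ : F₁.Finite)
    (hdiag : ∀ ξ, ξ ∉ F₁ → ∀ ℓ : Fin m, ‖P ℓ ℓ ξ‖ ≥ Cdiag ℓ * wt ξ ^ (k ℓ / 2)) :
    ∃ F : Set (Fin r → ℤ), F.Finite ∧
      ∀ ξ, ξ ∉ F →
        sminVal (Matrix.of fun j i => P j i ξ) ≥
          (Finset.univ.inf' ⟨(⟨0, by omega⟩ : Fin m), Finset.mem_univ _⟩ Cdiag) / 2 *
            wt ξ ^ ((Finset.univ.inf' ⟨(⟨0, by omega⟩ : Fin m), Finset.mem_univ _⟩ k) / 2) := by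
  classical
  have hι : (0:ℕ) < m := by omega
  haveI : Nonempty (Fin m) := ⟨⟨0, hι⟩⟩
  set hne : (Finset.univ : Finset (Fin m)).Nonempty :=
    ⟨(⟨0, by omega⟩ : Fin m), Finset.mem_univ _⟩ with hhne
  set Cmin := Finset.univ.inf' hne Cdiag with hCmin
  set kmin := Finset.univ.inf' hne k with hkmin
  have hCminpos : 0 < Cmin := (Finset.lt_inf'_iff hne).mpr fun i _ => hCdiag i
  have hCminle : ∀ ℓ, Cmin ≤ Cdiag ℓ := fun ℓ => Finset.inf'_le _ (Finset.mem_univ ℓ)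
  have hkminle : ∀ ℓ, kmin ≤ k ℓ := fun ℓ => Finset.inf'_le _ (Finset.mem_univ ℓ)
  set B : Fin m → ℝ := fun ℓ => max 1 (2*(m-1)*C'/Cdiag ℓ) with hB
  have hB1 : ∀ ℓ, 1 ≤ B ℓ := fun ℓ => le_max_left _ _
  set M : Fin m → ℝ := fun ℓ => (B ℓ) ^ (2/(k ℓ - τ ℓ)) with hM
  set Mtot := Finset.univ.sup' hne M with hMtot
  refine ⟨F₀ ∪ F₁ ∪ {ξ | wt ξ < Mtot}, (hF₀.union hF₁).union (wt_lt_finite r Mtot), ?_⟩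
  intro ξ hξ
  simp only [Set.mem_union, Set.mem_setOf_eq, not_or, not_lt] at hξ
  obtain ⟨⟨hξ0, hξ1⟩, hξM⟩ := hξ
  have hwt1 : (1:ℝ) ≤ wt ξ := wt_ge_one ξ
  have hwtpos : (0:ℝ) < wt ξ := by linarith
  -- key per-ℓ estimate on wt^{(k-τ)/2}
  have hBle : ∀ ℓ, B ℓ ≤ wt ξ ^ ((k ℓ - τ ℓ)/2) := by
    intro ℓ
    have hδ : 0 < k ℓ - τ ℓ := by linarith [hk ℓ]
    have hBpos : 0 < B ℓ := lt_of_lt_of_le one_pos (hB1 ℓ)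
    have hMξ : M ℓ ≤ wt ξ := le_trans (Finset.le_sup' M (Finset.mem_univ ℓ)) hξM
    have hMnn : 0 ≤ M ℓ := (Real.rpow_pos_of_pos hBpos _).le
    have h1 : (M ℓ) ^ ((k ℓ - τ ℓ)/2) ≤ wt ξ ^ ((k ℓ - τ ℓ)/2) :=
      Real.rpow_le_rpow hMnn hMξ (by positivity)
    have h2 : (M ℓ) ^ ((k ℓ - τ ℓ)/2) = B ℓ := by
      rw [hM]
      rw [← Real.rpow_mul hBpos.le]
      rw [show (2/(k ℓ - τ ℓ)) * ((k ℓ - τ ℓ)/2) = 1 by field_simp]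
      exact Real.rpow_one _
    linarith
  -- off-diagonal sums bound
  have hrow : ∀ ℓ, (∑ i ∈ Finset.univ.erase ℓ, ‖P ℓ i ξ‖) ≤ (m-1) * (C' * wt ξ ^ (τ ℓ/2)) := by
    intro ℓ
    have h1 : ∀ i ∈ Finset.univ.erase ℓ, ‖P ℓ i ξ‖ ≤ C' * wt ξ ^ (τ ℓ/2) := by
      intro i hi
      exact (hoff ξ ℓ i (Finset.ne_of_mem_erase hi)).1
    calc (∑ i ∈ Finset.univ.erase ℓ, ‖P ℓ i ξ‖)
        ≤ ∑ _i ∈ Finset.univ.erase ℓ, C' * wt ξ ^ (τ ℓ/2) := Finset.sum_le_sum h1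
      _ = (m-1) * (C' * wt ξ ^ (τ ℓ/2)) := by
          rw [Finset.sum_const, Finset.card_erase_of_mem (Finset.mem_univ ℓ),
            Finset.card_univ, Fintype.card_fin, nsmul_eq_mul]
          congr 1
          have : (1:ℕ) ≤ m := by omega
          push_cast [this]
          ring
  have hcol : ∀ ℓ, (∑ j ∈ Finset.univ.erase ℓ, ‖P j ℓ ξ‖) ≤ (m-1) * (C' * wt ξ ^ (τ ℓ/2)) := by
    intro ℓ
    have h1 : ∀ j ∈ Finset.univ.erase ℓ, ‖P j ℓ ξ‖ ≤ C' * wt ξ ^ (τ ℓ/2) := by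
      intro j hj
      exact (hoff ξ ℓ j (Finset.ne_of_mem_erase hj)).2
    calc (∑ j ∈ Finset.univ.erase ℓ, ‖P j ℓ ξ‖)
        ≤ ∑ _j ∈ Finset.univ.erase ℓ, C' * wt ξ ^ (τ ℓ/2) := Finset.sum_le_sum h1
      _ = (m-1) * (C' * wt ξ ^ (τ ℓ/2)) := by
          rw [Finset.sum_const, Finset.card_erase_of_mem (Finset.mem_univ ℓ),
            Finset.card_univ, Fintype.card_fin, nsmul_eq_mul]
          congr 1
          have : (1:ℕ) ≤ m := by omega
          push_cast [this]
          ring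
  -- (m-1) C' wt^{τ/2} ≤ (Cdiag ℓ / 2) wt^{k/2}
  have hkey : ∀ ℓ, (m-1) * (C' * wt ξ ^ (τ ℓ/2)) ≤ Cdiag ℓ / 2 * wt ξ ^ (k ℓ/2) := by
    intro ℓ
    have hsplitexp : wt ξ ^ (k ℓ/2) = wt ξ ^ (τ ℓ/2) * wt ξ ^ ((k ℓ - τ ℓ)/2) := by
      rw [← Real.rpow_add hwtpos]
      ring_nf
    have ha : (0:ℝ) < wt ξ ^ (τ ℓ/2) := Real.rpow_pos_of_pos hwtpos _
    have hb : 2*(m-1)*C'/Cdiag ℓ ≤ wt ξ ^ ((k ℓ - τ ℓ)/2) :=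
      le_trans (le_max_right _ _) (hBle ℓ)
    have h1 : Cdiag ℓ / 2 * wt ξ ^ (τ ℓ/2) * (2*(m-1)*C'/Cdiag ℓ)
        ≤ Cdiag ℓ / 2 * wt ξ ^ (τ ℓ/2) * (wt ξ ^ ((k ℓ - τ ℓ)/2)) := by
      exact mul_le_mul_of_nonneg_left hb
        (mul_nonneg (by linarith [hCdiag ℓ]) ha.le)
    have h2 : Cdiag ℓ / 2 * wt ξ ^ (τ ℓ/2) * (2*(m-1)*C'/Cdiag ℓ)
        = (m-1) * (C' * wt ξ ^ (τ ℓ/2)) := by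
      have hCne : Cdiag ℓ ≠ 0 := ne_of_gt (hCdiag ℓ)
      field_simp
    rw [hsplitexp]
    calc (m-1) * (C' * wt ξ ^ (τ ℓ/2)) = _ := h2.symm
      _ ≤ _ := h1
      _ = Cdiag ℓ / 2 * (wt ξ ^ (τ ℓ/2) * wt ξ ^ ((k ℓ - τ ℓ)/2)) := by ring
  -- c ≤ (Cdiag ℓ/2) wt^{kℓ/2}
  have hcle : ∀ ℓ, Cmin / 2 * wt ξ ^ (kmin/2) ≤ Cdiag ℓ / 2 * wt ξ ^ (k ℓ/2) := by
    intro ℓ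
    have h1 : wt ξ ^ (kmin/2) ≤ wt ξ ^ (k ℓ/2) :=
      Real.rpow_le_rpow_of_exponent_le hwt1 (by linarith [hkminle ℓ])
    have h2 : (0:ℝ) ≤ wt ξ ^ (kmin/2) := (Real.rpow_pos_of_pos hwtpos _).le
    apply mul_le_mul (by linarith [hCminle ℓ]) h1 h2 (by linarith [hCdiag ℓ])
  -- apply smin_ge
  rw [ge_iff_le]
  apply smin_ge
  · have := Real.rpow_pos_of_pos hwtpos (kmin/2)
    positivity
  · intro ℓ
    have hd := hdiag ξ hξ1 ℓ
    have e : ∀ j i, (Matrix.of fun j i => P j i ξ) j i = P j i ξ := fun _ _ => rfl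
    simp only [e]
    have := hrow ℓ
    have := hcol ℓ
    have := hkey ℓ
    have := hcle ℓ
    linarith
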